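/- Let M be a connected Hausdorff topological manifold of dimension m ≥ 2 (a connected Hausdorff topological space locally homeomorphic to ℝ^m, i.e. a charted space modelled on ℝ^m with m ≥ 2). Then the complement of the diagonal in M × M, namely the set {(x, y) ∈ M × M : x ≠ y}, is a connected subset of M × M. -/

import Mathlib

open Set Metric

/-- In a real normed space of rank `> 1`, a ball minus a countable set is path-connected. -/
lemma aux_ball_diff_countable {E : Type*} [NormedAddCommGroup E] [NormedSpace ℝ E]
    (hrank : 1 < Module.rank ℝ E) (c : E) {r : ℝ} (hr : 0 < r) {s : Set E}
    (hs : s.Countable) : IsPathConnected (ball c r \ s) := by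
  set B := OpenPartialHomeomorph.univBall c r with hB
  have hBsource : B.source = univ := OpenPartialHomeomorph.univBall_source c r
  have hBtarget : B.target = ball c r := OpenPartialHomeomorph.univBall_target c hr
  have hBinj : Function.Injective B := fun x y h =>
    B.injOn (by rw [hBsource]; trivial) (by rw [hBsource]; trivial) h
  have hBcont : Continuous B := by
    rw [← continuousOn_univ, ← hBsource]
    exact B.continuousOn
  have hpre : (B ⁻¹' s).Countable := hs.preimage hBinj
  have hpc : IsPathConnected ((B ⁻¹' s)ᶜ) :=
    hpre.isPathConnected_compl_of_one_lt_rank hrank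
  have himg : B '' ((B ⁻¹' s)ᶜ) = ball c r \ s := by
    apply Subset.antisymm
    · rintro _ ⟨x, hx, rfl⟩
      refine ⟨?_, hx⟩
      have := B.map_source (x := x) (by rw [hBsource]; trivial)
      rwa [hBtarget] at this
    · rintro y ⟨hy, hys⟩
      have hyt : y ∈ B.target := by rwa [hBtarget]
      refine ⟨B.symm y, ?_, B.right_inv hyt⟩
      simp only [mem_compl_iff, mem_preimage, B.right_inv hyt]
      exact hys
  rw [← himg]
  exact hpc.image hBcont

/-- Around any point of a manifold modelled on a Euclidean space of dimension `≥ 2`,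
there is an open neighbourhood `W` such that `W` minus any countable set is
path-connected. -/
lemma aux_chart_nbhd {m : ℕ} (hm : 2 ≤ m) {M : Type*} [TopologicalSpace M]
    [ChartedSpace (EuclideanSpace ℝ (Fin m)) M] (a : M) {s : Set M} (hs : s.Countable) :
    ∃ W : Set M, IsOpen W ∧ a ∈ W ∧ IsPathConnected (W \ s) := by
  set E := EuclideanSpace ℝ (Fin m) with hE
  have hrank : 1 < Module.rank ℝ E := by
    have h1 : Module.finrank ℝ E = m := finrank_euclideanSpace_fin
    rw [← Module.finrank_eq_rank, h1]
    exact_mod_cast hm.trans_lt' one_lt_two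
  set e := chartAt E a with he
  have ha : a ∈ e.source := mem_chart_source E a
  obtain ⟨r, hr, hball⟩ := Metric.isOpen_iff.1 e.open_target _ (e.map_source ha)
  refine ⟨e.source ∩ e ⁻¹' ball (e a) r, e.isOpen_inter_preimage isOpen_ball,
    ⟨ha, by simp [hr]⟩, ?_⟩
  have key : (e.source ∩ e ⁻¹' ball (e a) r) \ s
      = e.symm '' (ball (e a) r \ (e '' (s ∩ e.source))) := by
    apply Subset.antisymm
    · rintro x ⟨⟨hx1, hx2⟩, hxs⟩
      refine ⟨e x, ⟨hx2, ?_⟩, e.left_inv hx1⟩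
      rintro ⟨z, ⟨hzs, hz1⟩, hz2⟩
      exact hxs (by rwa [e.injOn hz1 hx1 hz2] at hzs)
    · rintro _ ⟨y, ⟨hy1, hy2⟩, rfl⟩
      have hyt : y ∈ e.target := hball hy1
      refine ⟨⟨e.map_target hyt, ?_⟩, ?_⟩
      · simpa [e.right_inv hyt] using hy1
      · intro hmem
        exact hy2 ⟨e.symm y, ⟨hmem, e.map_target hyt⟩, e.right_inv hyt⟩
  rw [key]
  exact (aux_ball_diff_countable hrank (e a) hr
    ((hs.mono inter_subset_left).image _)).image' (e.symm.continuousOn.mono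
      (fun y hy => hball hy.1))

/-- In a connected manifold of dimension `≥ 2`, the complement of a point is connected. -/
lemma aux_compl_singleton_connected {m : ℕ} (hm : 2 ≤ m) {M : Type*} [TopologicalSpace M]
    [T1Space M] [ConnectedSpace M] [ChartedSpace (EuclideanSpace ℝ (Fin m)) M] (a : M) :
    IsConnected ({a}ᶜ : Set M) := by
  haveI : LocallyConnectedSpace M :=
    ChartedSpace.locallyConnectedSpace (EuclideanSpace ℝ (Fin m)) M
  obtain ⟨W, hWopen, haW, hWpc⟩ := aux_chart_nbhd hm a (countable_singleton a)
  obtain ⟨x, ⟨hxW, hxa⟩, -⟩ := id hWpc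
  have hxa' : x ∈ ({a}ᶜ : Set M) := hxa
  set C := connectedComponentIn ({a}ᶜ : Set M) x with hC
  have hCopen : IsOpen C := isOpen_compl_singleton.connectedComponentIn
  have hCsub : C ⊆ ({a}ᶜ : Set M) := connectedComponentIn_subset _ _
  have hWC : W \ {a} ⊆ C :=
    IsPreconnected.subset_connectedComponentIn hWpc.isConnected.isPreconnected
      ⟨hxW, hxa⟩ (fun z hz => hz.2)
  have hUnion : C ∪ {a} = C ∪ W := by
    apply Subset.antisymm
    · exact union_subset subset_union_left
        (singleton_subset_iff.2 (Or.inr haW))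
    · refine union_subset subset_union_left (fun z hz => ?_)
      by_cases hza : z = a
      · exact Or.inr (hza ▸ rfl)
      · exact Or.inl (hWC ⟨hz, hza⟩)
  have hCaOpen : IsOpen (C ∪ {a}) := hUnion ▸ hCopen.union hWopen
  have hDopen : IsOpen (({a}ᶜ : Set M) \ C) := by
    have : ({a}ᶜ : Set M) \ C
        = ⋃ y ∈ ({a}ᶜ : Set M) \ C, connectedComponentIn ({a}ᶜ : Set M) y := by
      apply Subset.antisymm
      · intro y hy
        exact mem_biUnion hy (mem_connectedComponentIn hy.1)
      · rintro z hz
        simp only [mem_iUnion] at hz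
        obtain ⟨y, hy, hzy⟩ := hz
        refine ⟨connectedComponentIn_subset _ _ hzy, fun hzC => ?_⟩
        have h1 : connectedComponentIn ({a}ᶜ : Set M) y
            = connectedComponentIn ({a}ᶜ : Set M) z := connectedComponentIn_eq hzy
        have h2 : connectedComponentIn ({a}ᶜ : Set M) x
            = connectedComponentIn ({a}ᶜ : Set M) z := connectedComponentIn_eq hzC
        exact hy.2 (by rw [hC, h2, ← h1]; exact mem_connectedComponentIn hy.1)
    rw [this]
    exact isOpen_biUnion fun y _ => isOpen_compl_singleton.connectedComponentIn
  have hclopen : IsClopen (C ∪ {a}) := by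
    refine ⟨?_, hCaOpen⟩
    rw [← isOpen_compl_iff]
    convert hDopen using 1
    ext z
    simp only [mem_compl_iff, mem_union, mem_singleton_iff, mem_diff]
    constructor
    · intro h; exact ⟨fun hz => h (Or.inr hz), fun hz => h (Or.inl hz)⟩
    · rintro ⟨h1, h2⟩ (h | h) <;> [exact h2 h; exact h1 h]
  have huniv : C ∪ {a} = univ := hclopen.eq_univ ⟨a, Or.inr rfl⟩
  have : ({a}ᶜ : Set M) = C := by
    apply Subset.antisymm _ hCsub
    intro z hz
    have : z ∈ C ∪ {a} := huniv ▸ mem_univ z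
    rcases this with h | h
    · exact h
    · exact absurd h hz
  rw [this, hC]
  exact isConnected_connectedComponentIn_iff.2 hxa'

/-- In a manifold of dimension `≥ 2`, any two points can be avoided. -/
lemma aux_third_point {m : ℕ} (hm : 2 ≤ m) {M : Type*} [TopologicalSpace M]
    [ChartedSpace (EuclideanSpace ℝ (Fin m)) M] (a b : M) : ∃ x : M, x ≠ a ∧ x ≠ b := by
  obtain ⟨W, _, _, hWpc⟩ :=
    aux_chart_nbhd hm a (s := {a, b}) ((countable_singleton a).insert b |>.mono (by
      intro x hx; rcases hx with h | h
      · exact Or.inr h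
      · exact Or.inl h))
  obtain ⟨x, ⟨-, hx⟩, -⟩ := id hWpc
  simp only [mem_insert_iff, mem_singleton_iff, not_or] at hx
  exact ⟨x, hx.1, hx.2⟩

/-- For a connected Hausdorff topological manifold `M` of dimension `m ≥ 2`,
the complement of the diagonal in `M × M` is connected. -/
theorem isConnected_compl_diagonal_of_manifold
    (m : ℕ) (hm : 2 ≤ m)
    (M : Type*) [TopologicalSpace M] [T2Space M] [ConnectedSpace M]
    [ChartedSpace (EuclideanSpace ℝ (Fin m)) M] :
    IsConnected {p : M × M | p.1 ≠ p.2} := by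
  -- vertical and horizontal slices
  have hVpre : ∀ a : M, IsPreconnected (({a} : Set M) ×ˢ ({a}ᶜ : Set M)) := fun a =>
    isPreconnected_singleton.prod (aux_compl_singleton_connected hm a).isPreconnected
  have hHpre : ∀ b : M, IsPreconnected (({b}ᶜ : Set M) ×ˢ ({b} : Set M)) := fun b =>
    (aux_compl_singleton_connected hm b).isPreconnected.prod isPreconnected_singleton
  have hVsub : ∀ a : M, (({a} : Set M) ×ˢ ({a}ᶜ : Set M)) ⊆ {p : M × M | p.1 ≠ p.2} := by
    rintro a ⟨u, v⟩ ⟨hu, hv⟩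
    simp only [mem_singleton_iff] at hu
    intro h
    exact hv (by rw [← h, hu]; rfl)
  have hHsub : ∀ b : M, (({b}ᶜ : Set M) ×ˢ ({b} : Set M)) ⊆ {p : M × M | p.1 ≠ p.2} := by
    rintro b ⟨u, v⟩ ⟨hu, hv⟩
    simp only [mem_singleton_iff] at hv
    intro h
    exact hu (by rw [h, hv]; rfl)
  -- basepoint
  inhabit M
  obtain ⟨b₀, hb₀, _⟩ := aux_third_point hm (default : M) (default : M)
  set a₀ := (default : M)
  have hp₀ : ((a₀, b₀) : M × M) ∈ {p : M × M | p.1 ≠ p.2} := fun h => hb₀ h.symm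
  refine ⟨⟨(a₀, b₀), hp₀⟩, ?_⟩
  apply isPreconnected_of_forall ((a₀, b₀) : M × M)
  rintro ⟨c, d⟩ hy
  have hcd : c ≠ d := hy
  obtain ⟨e, hea, hec⟩ := aux_third_point hm a₀ c
  have hb₀' : b₀ ∈ ({a₀}ᶜ : Set M) := hb₀
  have hd : d ∈ ({c}ᶜ : Set M) := fun h => hcd (mem_singleton_iff.1 h).symm
  have hea' : e ∈ ({a₀}ᶜ : Set M) := hea
  have hae : a₀ ∈ ({e}ᶜ : Set M) := fun h => hea (mem_singleton_iff.1 h).symm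
  have hec' : e ∈ ({c}ᶜ : Set M) := hec
  have hce : c ∈ ({e}ᶜ : Set M) := fun h => hec (mem_singleton_iff.1 h).symm
  refine ⟨(({a₀} : Set M) ×ˢ ({a₀}ᶜ : Set M)) ∪
      ((({e}ᶜ : Set M) ×ˢ ({e} : Set M)) ∪ (({c} : Set M) ×ˢ ({c}ᶜ : Set M))), ?_, ?_, ?_, ?_⟩
  · exact union_subset (hVsub a₀) (union_subset (hHsub e) (hVsub c))
  · exact Or.inl (mem_prod.2 ⟨rfl, hb₀'⟩)
  · exact Or.inr (Or.inr (mem_prod.2 ⟨rfl, hd⟩))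
  · apply IsPreconnected.union ((a₀, e) : M × M)
    · exact mem_prod.2 ⟨rfl, hea'⟩
    · exact Or.inl (mem_prod.2 ⟨hae, rfl⟩)
    · exact hVpre a₀
    · apply IsPreconnected.union ((c, e) : M × M)
      · exact mem_prod.2 ⟨hce, rfl⟩
      · exact mem_prod.2 ⟨rfl, hec'⟩
      · exact hHpre e
      · exact hVpre c
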